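/- For the 3×3 quasi-independence model with structural zero at (3,3), the UMVUE of the expected count in cell (1,3) equals u_{1·} u_{·3} / (u_{1·} + u_{2·}); that is, Z_A(b − a_{13};1)/Z_A(b;1) = u_{1·}(u_{13}+u_{23})/(u_{1·}+u_{2·}). -/

import Mathlib

open Finset

/-- `Z_A(b;1)` for the 3×3 quasi-independence model with a structural zero at
cell (3,3), with margins `b = (R₁, R₂, R₃, C₁, C₂, C₃)`; the sum of `1/∏u!`
over all count vectors `u : Fin 8 → ℕ` with these margins. -/
noncomputable def Zquasi (R₁ R₂ R₃ C₁ C₂ C₃ : ℕ) : ℚ :=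
  ∑ u ∈ (Fintype.piFinset fun _ : Fin 8 => range (R₁ + R₂ + R₃ + 1)).filter
      (fun u : Fin 8 → ℕ =>
        u 0 + u 1 + u 2 = R₁ ∧ u 3 + u 4 + u 5 = R₂ ∧ u 6 + u 7 = R₃ ∧
        u 0 + u 3 + u 6 = C₁ ∧ u 1 + u 4 + u 7 = C₂ ∧ u 2 + u 5 = C₃),
    (1 : ℚ) / ∏ k, (Nat.factorial (u k) : ℚ)


/-- Vandermonde convolution with an explicit `if` guard and flexible range. -/
lemma vdm_ite (p q r n : ℕ) (h : p ≤ n ∨ r ≤ n) :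
    ∑ c ∈ range (n+1), (if c ≤ r then p.choose c * q.choose (r-c) else 0)
      = (p+q).choose r := by
  have base : ∑ c ∈ range (r+1), p.choose c * q.choose (r-c) = (p+q).choose r := by
    rw [Nat.add_choose_eq, Finset.Nat.sum_antidiagonal_eq_sum_range_succ_mk]
  rcases le_or_gt r n with hr | hr
  · calc ∑ c ∈ range (n+1), (if c ≤ r then p.choose c * q.choose (r-c) else 0)
        = ∑ c ∈ range (r+1), (if c ≤ r then p.choose c * q.choose (r-c) else 0) := by
          refine (Finset.sum_subset (Finset.range_subset_range.mpr (by omega)) ?_).symm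
          intro c hc hcn
          simp only [mem_range] at hc hcn
          rw [if_neg (by omega)]
      _ = ∑ c ∈ range (r+1), p.choose c * q.choose (r-c) := by
          refine Finset.sum_congr rfl fun c hc => ?_
          simp only [mem_range] at hc
          rw [if_pos (by omega)]
      _ = (p+q).choose r := base
  · have hp : p ≤ n := by omega
    calc ∑ c ∈ range (n+1), (if c ≤ r then p.choose c * q.choose (r-c) else 0)
        = ∑ c ∈ range (n+1), p.choose c * q.choose (r-c) := by
          refine Finset.sum_congr rfl fun c hc => ?_
          simp only [mem_range] at hc
          rw [if_pos (by omega)]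
      _ = ∑ c ∈ range (r+1), p.choose c * q.choose (r-c) := by
          refine Finset.sum_subset (Finset.range_subset_range.mpr (by omega)) ?_
          intro c hc hcn
          simp only [mem_range] at hc hcn
          rw [Nat.choose_eq_zero_of_lt (by omega), zero_mul]
      _ = (p+q).choose r := base

/-- The 2×2 "exponential Vandermonde": summing `1/∏ u!` over 2×2 tables with
row sums `α, β` and first column sum `γ`. -/
lemma quasiInnerSum (α β γ n : ℕ) (hγ : γ ≤ n) :
    ∑ a ∈ range (n+1), (if a ≤ α ∧ a ≤ γ ∧ γ - a ≤ β then
        (1:ℚ)/((a.factorial : ℚ) * ((α-a).factorial : ℚ) * ((γ-a).factorial : ℚ)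
          * ((β-(γ-a)).factorial : ℚ)) else 0)
      = ((α+β).choose γ : ℚ) / ((α.factorial : ℚ) * (β.factorial : ℚ)) := by
  have key : ∀ a ∈ range (n+1), (if a ≤ α ∧ a ≤ γ ∧ γ - a ≤ β then
        (1:ℚ)/((a.factorial : ℚ) * ((α-a).factorial : ℚ) * ((γ-a).factorial : ℚ)
          * ((β-(γ-a)).factorial : ℚ)) else 0)
      = ((if a ≤ γ then α.choose a * β.choose (γ-a) else 0 : ℕ) : ℚ)
          / ((α.factorial : ℚ) * (β.factorial : ℚ)) := by
    intro a _
    by_cases h1 : a ≤ γ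
    · by_cases h2 : a ≤ α ∧ γ - a ≤ β
      · rw [if_pos ⟨h2.1, h1, h2.2⟩, if_pos h1]
        have e1 : ((α.factorial : ℚ)) = (α.choose a : ℚ) * a.factorial * (α-a).factorial := by
          exact_mod_cast congrArg (Nat.cast (R := ℚ))
            (Nat.choose_mul_factorial_mul_factorial h2.1).symm
        have e2 : ((β.factorial : ℚ)) = (β.choose (γ-a) : ℚ) * (γ-a).factorial
            * (β-(γ-a)).factorial := by
          exact_mod_cast congrArg (Nat.cast (R := ℚ))
            (Nat.choose_mul_factorial_mul_factorial h2.2).symm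
        rw [e1, e2]
        have f1 : (a.factorial : ℚ) ≠ 0 := Nat.cast_ne_zero.mpr (Nat.factorial_ne_zero _)
        have f2 : ((α-a).factorial : ℚ) ≠ 0 := Nat.cast_ne_zero.mpr (Nat.factorial_ne_zero _)
        have f3 : ((γ-a).factorial : ℚ) ≠ 0 := Nat.cast_ne_zero.mpr (Nat.factorial_ne_zero _)
        have f4 : ((β-(γ-a)).factorial : ℚ) ≠ 0 := Nat.cast_ne_zero.mpr (Nat.factorial_ne_zero _)
        have c1 : (α.choose a : ℚ) ≠ 0 :=
          Nat.cast_ne_zero.mpr (Nat.choose_pos h2.1).ne'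
        have c2 : (β.choose (γ-a) : ℚ) ≠ 0 :=
          Nat.cast_ne_zero.mpr (Nat.choose_pos h2.2).ne'
        push_cast
        field_simp
      · rw [if_neg (by tauto), if_pos h1]
        have : α.choose a * β.choose (γ-a) = 0 := by
          rcases not_and_or.mp h2 with h | h
          · rw [Nat.choose_eq_zero_of_lt (show α < a by omega), zero_mul]
          · rw [Nat.choose_eq_zero_of_lt (show β < γ - a by omega), mul_zero]
        rw [this]
        simp
    · rw [if_neg (by tauto), if_neg h1]
      simp
  rw [Finset.sum_congr rfl key, ← Finset.sum_div]
  congr 1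
  rw [← Nat.cast_sum]
  exact_mod_cast congrArg (Nat.cast (R := ℚ)) (vdm_ite α β γ n (Or.inr hγ))

section Reindex

variable (R₁ R₂ R₃ C₁ C₂ C₃ : ℕ)

/-- the table reconstructed from `(b, c, a) = (u₂, u₆, u₀)` -/
def tab (x : ℕ × ℕ × ℕ) : Fin 8 → ℕ := fun k =>
  if k.val = 0 then x.2.2
  else if k.val = 1 then R₁ - x.2.2 - x.1
  else if k.val = 2 then x.1
  else if k.val = 3 then C₁ - x.2.2 - x.2.1
  else if k.val = 4 then R₂ - ((C₁ - x.2.2 - x.2.1) + (C₃ - x.1))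
  else if k.val = 5 then C₃ - x.1
  else if k.val = 6 then x.2.1
  else R₃ - x.2.1

lemma quasiStep1 (hcons : R₁ + R₂ + R₃ = C₁ + C₂ + C₃) :
    Zquasi R₁ R₂ R₃ C₁ C₂ C₃
      = ∑ x ∈ (range (C₃+1) ×ˢ range (R₃+1) ×ˢ range (C₁+1)).filter
          (fun x : ℕ × ℕ × ℕ => x.2.2 + x.1 ≤ R₁ ∧ x.2.2 + x.2.1 ≤ C₁ ∧
            (C₁ - x.2.2 - x.2.1) + (C₃ - x.1) ≤ R₂),
        (1:ℚ) / ((x.2.2.factorial : ℚ) * ((R₁ - x.2.2 - x.1).factorial : ℚ)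
          * (x.1.factorial : ℚ) * ((C₁ - x.2.2 - x.2.1).factorial : ℚ)
          * ((R₂ - ((C₁ - x.2.2 - x.2.1) + (C₃ - x.1))).factorial : ℚ)
          * ((C₃ - x.1).factorial : ℚ) * (x.2.1.factorial : ℚ)
          * ((R₃ - x.2.1).factorial : ℚ)) := by
  refine Finset.sum_nbij' (fun u => (u 2, u 6, u 0)) (tab R₁ R₂ R₃ C₁ C₃) ?_ ?_ ?_ ?_ ?_
  · intro u hu
    simp only [mem_filter, Fintype.mem_piFinset, mem_range] at hu
    obtain ⟨-, p1, p2, p3, p4, p5, p6⟩ := hu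
    simp only [mem_filter, mem_product, mem_range]
    refine ⟨⟨by omega, by omega, by omega⟩, by omega, by omega, by omega⟩
  · rintro ⟨b, c, a⟩ hx
    simp only [mem_filter, mem_product, mem_range] at hx
    obtain ⟨⟨hb, hc, ha⟩, q1, q2, q3⟩ := hx
    simp only [mem_filter, Fintype.mem_piFinset, mem_range]
    refine ⟨?_, ?_, ?_, ?_, ?_, ?_, ?_⟩
    · intro k
      fin_cases k
      · show a < R₁ + R₂ + R₃ + 1; omega
      · show R₁ - a - b < R₁ + R₂ + R₃ + 1; omega
      · show b < R₁ + R₂ + R₃ + 1; omega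
      · show C₁ - a - c < R₁ + R₂ + R₃ + 1; omega
      · show R₂ - ((C₁ - a - c) + (C₃ - b)) < R₁ + R₂ + R₃ + 1; omega
      · show C₃ - b < R₁ + R₂ + R₃ + 1; omega
      · show c < R₁ + R₂ + R₃ + 1; omega
      · show R₃ - c < R₁ + R₂ + R₃ + 1; omega
    · show a + (R₁ - a - b) + b = R₁; omega
    · show (C₁ - a - c) + (R₂ - ((C₁ - a - c) + (C₃ - b))) + (C₃ - b) = R₂; omega
    · show c + (R₃ - c) = R₃; omega
    · show a + (C₁ - a - c) + c = C₁; omega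
    · show (R₁ - a - b) + (R₂ - ((C₁ - a - c) + (C₃ - b))) + (R₃ - c) = C₂; omega
    · show b + (C₃ - b) = C₃; omega
  · intro u hu
    simp only [mem_filter, Fintype.mem_piFinset, mem_range] at hu
    obtain ⟨-, p1, p2, p3, p4, p5, p6⟩ := hu
    funext k
    fin_cases k
    · show u 0 = u 0; rfl
    · show R₁ - u 0 - u 2 = u 1; omega
    · show u 2 = u 2; rfl
    · show C₁ - u 0 - u 6 = u 3; omega
    · show R₂ - ((C₁ - u 0 - u 6) + (C₃ - u 2)) = u 4; omega
    · show C₃ - u 2 = u 5; omega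
    · show u 6 = u 6; rfl
    · show R₃ - u 6 = u 7; omega
  · rintro ⟨b, c, a⟩ _
    rfl
  · intro u hu
    simp only [mem_filter, Fintype.mem_piFinset, mem_range] at hu
    obtain ⟨-, p1, p2, p3, p4, p5, p6⟩ := hu
    have e1 : R₁ - u 0 - u 2 = u 1 := by omega
    have e3 : C₁ - u 0 - u 6 = u 3 := by omega
    have e4 : R₂ - ((C₁ - u 0 - u 6) + (C₃ - u 2)) = u 4 := by omega
    have e5 : C₃ - u 2 = u 5 := by omega
    have e7 : R₃ - u 6 = u 7 := by omega
    show (1:ℚ) / ∏ k, (Nat.factorial (u k) : ℚ) = _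
    rw [Fin.prod_univ_eight]
    show _ = (1:ℚ) / (((u 0).factorial : ℚ) * ((R₁ - u 0 - u 2).factorial : ℚ)
      * ((u 2).factorial : ℚ) * ((C₁ - u 0 - u 6).factorial : ℚ)
      * ((R₂ - ((C₁ - u 0 - u 6) + (C₃ - u 2))).factorial : ℚ)
      * ((C₃ - u 2).factorial : ℚ) * ((u 6).factorial : ℚ)
      * ((R₃ - u 6).factorial : ℚ))
    rw [e4, e1, e3, e5, e7]

end Reindex

lemma quasiStep2 (R₁ R₂ R₃ C₁ C₂ C₃ : ℕ) (hcons : R₁ + R₂ + R₃ = C₁ + C₂ + C₃) :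
    Zquasi R₁ R₂ R₃ C₁ C₂ C₃
      = ∑ b ∈ range (C₃+1), ∑ c ∈ range (R₃+1), ∑ a ∈ range (C₁+1),
        (if a + b ≤ R₁ ∧ a + c ≤ C₁ ∧ (C₁ - a - c) + (C₃ - b) ≤ R₂ then
          (1:ℚ)/((a.factorial:ℚ) * ((R₁ - a - b).factorial:ℚ) * (b.factorial:ℚ)
            * ((C₁ - a - c).factorial:ℚ) * ((R₂ - ((C₁ - a - c) + (C₃ - b))).factorial:ℚ)
            * ((C₃ - b).factorial:ℚ) * (c.factorial:ℚ) * ((R₃ - c).factorial:ℚ)) else 0) := by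
  rw [quasiStep1 R₁ R₂ R₃ C₁ C₂ C₃ hcons, Finset.sum_filter, Finset.sum_product]
  refine Finset.sum_congr rfl fun b _ => ?_
  rw [Finset.sum_product]

lemma Zquasi_closed (R₁ R₂ R₃ C₁ C₂ C₃ : ℕ)
    (hcons : R₁ + R₂ + R₃ = C₁ + C₂ + C₃)
    (h1 : R₃ ≤ C₁ + C₂) (h2 : C₃ ≤ R₁ + R₂) :
    Zquasi R₁ R₂ R₃ C₁ C₂ C₃
      = (((R₁+R₂).choose C₃ : ℚ) * ((C₁+C₂).choose C₁ : ℚ))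
        / ((R₁.factorial : ℚ) * (R₂.factorial : ℚ) * (R₃.factorial : ℚ)) := by
  rw [quasiStep2 R₁ R₂ R₃ C₁ C₂ C₃ hcons]
  have hA : ∀ b ∈ range (C₃+1), ∀ c ∈ range (R₃+1),
      (∑ a ∈ range (C₁+1),
        (if a + b ≤ R₁ ∧ a + c ≤ C₁ ∧ (C₁ - a - c) + (C₃ - b) ≤ R₂ then
          (1:ℚ)/((a.factorial:ℚ) * ((R₁ - a - b).factorial:ℚ) * (b.factorial:ℚ)
            * ((C₁ - a - c).factorial:ℚ) * ((R₂ - ((C₁ - a - c) + (C₃ - b))).factorial:ℚ)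
            * ((C₃ - b).factorial:ℚ) * (c.factorial:ℚ) * ((R₃ - c).factorial:ℚ)) else 0))
      = (if b ≤ R₁ ∧ C₃ ≤ R₂ + b ∧ c ≤ C₁ then
          ((1:ℚ)/((b.factorial:ℚ) * ((C₃-b).factorial:ℚ) * (c.factorial:ℚ)
            * ((R₃-c).factorial:ℚ)))
          * (((R₁+R₂-C₃).choose (C₁-c) : ℚ)
            / (((R₁-b).factorial:ℚ) * ((R₂-(C₃-b)).factorial:ℚ))) else 0) := by
    intro b hb c hc
    simp only [mem_range] at hb hc
    by_cases hn : b ≤ R₁ ∧ C₃ ≤ R₂ + b ∧ c ≤ C₁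
    · rw [if_pos hn]
      have key : ∀ a ∈ range (C₁+1),
          (if a + b ≤ R₁ ∧ a + c ≤ C₁ ∧ (C₁ - a - c) + (C₃ - b) ≤ R₂ then
            (1:ℚ)/((a.factorial:ℚ) * ((R₁ - a - b).factorial:ℚ) * (b.factorial:ℚ)
              * ((C₁ - a - c).factorial:ℚ) * ((R₂ - ((C₁ - a - c) + (C₃ - b))).factorial:ℚ)
              * ((C₃ - b).factorial:ℚ) * (c.factorial:ℚ) * ((R₃ - c).factorial:ℚ)) else 0)
          = ((1:ℚ)/((b.factorial:ℚ) * ((C₃-b).factorial:ℚ) * (c.factorial:ℚ)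
              * ((R₃-c).factorial:ℚ)))
            * (if a ≤ R₁ - b ∧ a ≤ C₁ - c ∧ (C₁ - c) - a ≤ R₂ - (C₃ - b) then
                (1:ℚ)/((a.factorial:ℚ) * (((R₁-b)-a).factorial:ℚ) * (((C₁-c)-a).factorial:ℚ)
                  * (((R₂-(C₃-b))-((C₁-c)-a)).factorial:ℚ)) else 0) := by
        intro a _
        by_cases hQ : a + b ≤ R₁ ∧ a + c ≤ C₁ ∧ (C₁ - a - c) + (C₃ - b) ≤ R₂
        · rw [if_pos hQ, if_pos (by omega)]
          have a4 : R₂ - ((C₁ - a - c) + (C₃ - b)) = (R₂ - (C₃ - b)) - ((C₁ - c) - a) := by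
            omega
          have a1 : R₁ - a - b = (R₁ - b) - a := by omega
          have a3 : C₁ - a - c = (C₁ - c) - a := by omega
          rw [a4, a1, a3, one_div_mul_one_div]
          congr 1
          ring
        · rw [if_neg hQ, if_neg (by omega), mul_zero]
      rw [Finset.sum_congr rfl key, ← Finset.mul_sum,
        quasiInnerSum (R₁ - b) (R₂ - (C₃ - b)) (C₁ - c) C₁ (by omega),
        show (R₁ - b) + (R₂ - (C₃ - b)) = R₁ + R₂ - C₃ by omega]
    · rw [if_neg hn]
      refine Finset.sum_eq_zero fun a ha => ?_
      rw [if_neg (by omega)]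
  rw [Finset.sum_congr rfl fun b hb => Finset.sum_congr rfl fun c hc => hA b hb c hc]
  have hB : ∀ b ∈ range (C₃+1),
      (∑ c ∈ range (R₃+1),
        (if b ≤ R₁ ∧ C₃ ≤ R₂ + b ∧ c ≤ C₁ then
          ((1:ℚ)/((b.factorial:ℚ) * ((C₃-b).factorial:ℚ) * (c.factorial:ℚ)
            * ((R₃-c).factorial:ℚ)))
          * (((R₁+R₂-C₃).choose (C₁-c) : ℚ)
            / (((R₁-b).factorial:ℚ) * ((R₂-(C₃-b)).factorial:ℚ))) else 0))
      = (if b ≤ R₁ ∧ b ≤ C₃ ∧ C₃ - b ≤ R₂ then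
          (1:ℚ)/((b.factorial:ℚ) * ((R₁-b).factorial:ℚ) * ((C₃-b).factorial:ℚ)
            * ((R₂-(C₃-b)).factorial:ℚ)) else 0)
        * (((C₁+C₂).choose C₁ : ℚ) / (R₃.factorial : ℚ)) := by
    intro b hb
    simp only [mem_range] at hb
    by_cases hb2 : b ≤ R₁ ∧ C₃ ≤ R₂ + b
    · have key : ∀ c ∈ range (R₃+1),
          (if b ≤ R₁ ∧ C₃ ≤ R₂ + b ∧ c ≤ C₁ then
            ((1:ℚ)/((b.factorial:ℚ) * ((C₃-b).factorial:ℚ) * (c.factorial:ℚ)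
              * ((R₃-c).factorial:ℚ)))
            * (((R₁+R₂-C₃).choose (C₁-c) : ℚ)
              / (((R₁-b).factorial:ℚ) * ((R₂-(C₃-b)).factorial:ℚ))) else 0)
          = ((1:ℚ)/((b.factorial:ℚ) * ((R₁-b).factorial:ℚ) * ((C₃-b).factorial:ℚ)
              * ((R₂-(C₃-b)).factorial:ℚ)))
            * (((if c ≤ C₁ then R₃.choose c * (R₁+R₂-C₃).choose (C₁-c) else 0 : ℕ) : ℚ)
                / (R₃.factorial : ℚ)) := by
        intro c hc
        simp only [mem_range] at hc
        by_cases hcC : c ≤ C₁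
        · rw [if_pos ⟨hb2.1, hb2.2, hcC⟩, if_pos hcC]
          have e : ((R₃.factorial : ℚ))
              = (R₃.choose c : ℚ) * (c.factorial : ℚ) * ((R₃ - c).factorial : ℚ) := by
            exact_mod_cast congrArg (Nat.cast (R := ℚ))
              (Nat.choose_mul_factorial_mul_factorial (show c ≤ R₃ by omega)).symm
          rw [e]
          have f1 : (c.factorial : ℚ) ≠ 0 := Nat.cast_ne_zero.mpr (Nat.factorial_ne_zero _)
          have f2 : ((R₃-c).factorial : ℚ) ≠ 0 := Nat.cast_ne_zero.mpr (Nat.factorial_ne_zero _)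
          have f3 : (b.factorial : ℚ) ≠ 0 := Nat.cast_ne_zero.mpr (Nat.factorial_ne_zero _)
          have f4 : ((C₃-b).factorial : ℚ) ≠ 0 := Nat.cast_ne_zero.mpr (Nat.factorial_ne_zero _)
          have f5 : ((R₁-b).factorial : ℚ) ≠ 0 := Nat.cast_ne_zero.mpr (Nat.factorial_ne_zero _)
          have f6 : ((R₂-(C₃-b)).factorial : ℚ) ≠ 0 :=
            Nat.cast_ne_zero.mpr (Nat.factorial_ne_zero _)
          have f7 : (R₃.choose c : ℚ) ≠ 0 :=
            Nat.cast_ne_zero.mpr (Nat.choose_pos (show c ≤ R₃ by omega)).ne'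
          push_cast
          field_simp
        · rw [if_neg (by tauto), if_neg hcC]
          simp
      rw [Finset.sum_congr rfl key, ← Finset.mul_sum, ← Finset.sum_div, ← Nat.cast_sum,
        vdm_ite R₃ (R₁+R₂-C₃) C₁ R₃ (Or.inl le_rfl),
        show R₃ + (R₁+R₂-C₃) = C₁ + C₂ by omega, if_pos (show b ≤ R₁ ∧ b ≤ C₃ ∧ C₃ - b ≤ R₂ by omega)]
    · have key : ∀ c ∈ range (R₃+1),
          (if b ≤ R₁ ∧ C₃ ≤ R₂ + b ∧ c ≤ C₁ then
            ((1:ℚ)/((b.factorial:ℚ) * ((C₃-b).factorial:ℚ) * (c.factorial:ℚ)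
              * ((R₃-c).factorial:ℚ)))
            * (((R₁+R₂-C₃).choose (C₁-c) : ℚ)
              / (((R₁-b).factorial:ℚ) * ((R₂-(C₃-b)).factorial:ℚ))) else 0) = 0 :=
        fun c _ => if_neg (by tauto)
      rw [Finset.sum_congr rfl key, Finset.sum_const, smul_zero,
        if_neg (show ¬(b ≤ R₁ ∧ b ≤ C₃ ∧ C₃ - b ≤ R₂) by omega), zero_mul]
  rw [Finset.sum_congr rfl hB, ← Finset.sum_mul, quasiInnerSum R₁ R₂ C₃ C₃ le_rfl]
  ring

/-- The UMVUE of the expected count in cell (1,3) of the 3×3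
quasi-independence model with structural zero at (3,3):
`Z_A(b - a₁₃; 1)/Z_A(b; 1) = R₁ C₃ / (R₁ + R₂)`, where `a₁₃` decrements
`R₁` and `C₃` each by one. -/
theorem UMVUE_quasi_independence_cell13
    (R₁ R₂ R₃ C₁ C₂ C₃ : ℕ)
    (hcons : R₁ + R₂ + R₃ = C₁ + C₂ + C₃)
    (h1 : R₃ ≤ C₁ + C₂) (h2 : C₃ ≤ R₁ + R₂)
    (hR₁ : 1 ≤ R₁) (hC₃ : 1 ≤ C₃) :
    Zquasi (R₁ - 1) R₂ R₃ C₁ C₂ (C₃ - 1) / Zquasi R₁ R₂ R₃ C₁ C₂ C₃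
      = (R₁ * C₃ : ℚ) / (R₁ + R₂) := by
  rw [Zquasi_closed (R₁-1) R₂ R₃ C₁ C₂ (C₃-1) (by omega) h1 (by omega),
    Zquasi_closed R₁ R₂ R₃ C₁ C₂ C₃ hcons h1 h2]
  have key : ((R₁ + R₂ : ℚ)) * ((R₁ - 1 + R₂).choose (C₃ - 1) : ℚ)
      = ((R₁+R₂).choose C₃ : ℚ) * (C₃ : ℚ) := by
    have h := Nat.add_one_mul_choose_eq (R₁ + R₂ - 1) (C₃ - 1)
    rw [show R₁ + R₂ - 1 + 1 = R₁ + R₂ by omega, show C₃ - 1 + 1 = C₃ by omega,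
      show R₁ + R₂ - 1 = R₁ - 1 + R₂ by omega] at h
    exact_mod_cast congrArg (Nat.cast (R := ℚ)) h
  have hfac : (R₁.factorial : ℚ) = (R₁ : ℚ) * ((R₁ - 1).factorial : ℚ) := by
    have h : R₁.factorial = R₁ * (R₁ - 1).factorial := by
      conv_lhs => rw [show R₁ = (R₁ - 1) + 1 by omega]
      rw [Nat.factorial_succ, show R₁ - 1 + 1 = R₁ by omega]
    exact_mod_cast congrArg (Nat.cast (R := ℚ)) h
  have nA : ((R₁+R₂).choose C₃ : ℚ) ≠ 0 := Nat.cast_ne_zero.mpr (Nat.choose_pos h2).ne'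
  have nB : ((C₁+C₂).choose C₁ : ℚ) ≠ 0 :=
    Nat.cast_ne_zero.mpr (Nat.choose_pos (Nat.le_add_right _ _)).ne'
  have nf1 : (R₁.factorial : ℚ) ≠ 0 := Nat.cast_ne_zero.mpr (Nat.factorial_ne_zero _)
  have nf1' : ((R₁-1).factorial : ℚ) ≠ 0 := Nat.cast_ne_zero.mpr (Nat.factorial_ne_zero _)
  have nf2 : (R₂.factorial : ℚ) ≠ 0 := Nat.cast_ne_zero.mpr (Nat.factorial_ne_zero _)
  have nf3 : (R₃.factorial : ℚ) ≠ 0 := Nat.cast_ne_zero.mpr (Nat.factorial_ne_zero _)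
  have nRR : ((R₁ : ℚ) + R₂) ≠ 0 := by
    have : (0:ℚ) < (R₁ : ℚ) + R₂ := by
      have : (0:ℕ) < R₁ + R₂ := by omega
      exact_mod_cast this
    exact this.ne'
  field_simp
  linear_combination (((R₁ - 1 + R₂).choose (C₃ - 1) : ℚ) * ((R₁ : ℚ) + R₂)) * hfac
    + ((R₁ : ℚ) * ((R₁ - 1).factorial : ℚ)) * key
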